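/- If (X₁,X₂) ~ BDsIW(θ₁,θ₂,θ₃,ζ), then X₁ and X₂ are positive quadrant dependent: for all x₁, x₂ ∈ ℕ, P(X₁ ≤ x₁, X₂ ≤ x₂) ≥ P(X₁ ≤ x₁)·P(X₂ ≤ x₂). -/

import Mathlib

open MeasureTheory ProbabilityTheory Filter Real Set

/-- CDF of the discrete inverse Weibull distribution: `F(x;θ,ζ) = θ^((x+1)^(-ζ))`. -/
noncomputable def dsiwCDF (θ ζ : ℝ) (x : ℕ) : ℝ := θ ^ (((x : ℝ) + 1) ^ (-ζ))

/-- `θ^(x^(-ζ))` with the convention `θ^(0^(-ζ)) = 0`. -/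
noncomputable def dsiwC (θ ζ : ℝ) (x : ℕ) : ℝ := if x = 0 then 0 else θ ^ ((x : ℝ) ^ (-ζ))

/-- PMF of the discrete inverse Weibull distribution. -/
noncomputable def dsiwPMF (θ ζ : ℝ) (x : ℕ) : ℝ := dsiwCDF θ ζ x - dsiwC θ ζ x


/-- `X₁` and `X₂` are positive quadrant dependent when `(X₁,X₂) ~ BDsIW(θ₁,θ₂,θ₃,ζ)`:
`P(X₁ ≤ x₁, X₂ ≤ x₂) ≥ P(X₁ ≤ x₁) ⬝ P(X₂ ≤ x₂)` for all `x₁, x₂ ∈ ℕ`. -/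
theorem bdsiw_pqd {Ω : Type*} [MeasurableSpace Ω] (μ : Measure Ω)
    [IsProbabilityMeasure μ] (θ : Fin 3 → ℝ) (ζ : ℝ)
    (hθ : ∀ i, θ i ∈ Set.Ioo (0:ℝ) 1) (hζ : 0 < ζ)
    (W : Fin 3 → Ω → ℕ) (hW : ∀ i, Measurable (W i))
    (hindep : iIndepFun W μ)
    (hcdf : ∀ i x, μ {ω | W i ω ≤ x} = ENNReal.ofReal (dsiwCDF (θ i) ζ x))
    (x₁ x₂ : ℕ) :
    μ {ω | max (W 0 ω) (W 2 ω) ≤ x₁} * μ {ω | max (W 1 ω) (W 2 ω) ≤ x₂}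
      ≤ μ {ω | max (W 0 ω) (W 2 ω) ≤ x₁ ∧ max (W 1 ω) (W 2 ω) ≤ x₂} := by
  have hmeas : ∀ (s : ℕ), MeasurableSet (Set.Iic s) := fun s => measurableSet_Iic
  -- factorization of the first marginal
  have h1 : μ {ω | max (W 0 ω) (W 2 ω) ≤ x₁}
      = μ (W 0 ⁻¹' Set.Iic x₁) * μ (W 2 ⁻¹' Set.Iic x₁) := by
    have := hindep.measure_inter_preimage_eq_mul (S := {0, 2})
      (sets := ![Set.Iic x₁, Set.univ, Set.Iic x₁]) (fun i _ => by
        fin_cases i <;> simp [hmeas])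
    rw [show {ω | max (W 0 ω) (W 2 ω) ≤ x₁} =
        ⋂ i ∈ ({0, 2} : Finset (Fin 3)), W i ⁻¹' ![Set.Iic x₁, Set.univ, Set.Iic x₁] i by
      ext ω; simp [max_le_iff, and_comm]]
    rw [this]
    simp
  have h2 : μ {ω | max (W 1 ω) (W 2 ω) ≤ x₂}
      = μ (W 1 ⁻¹' Set.Iic x₂) * μ (W 2 ⁻¹' Set.Iic x₂) := by
    have := hindep.measure_inter_preimage_eq_mul (S := {1, 2})
      (sets := ![Set.univ, Set.Iic x₂, Set.Iic x₂]) (fun i _ => by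
        fin_cases i <;> simp [hmeas])
    rw [show {ω | max (W 1 ω) (W 2 ω) ≤ x₂} =
        ⋂ i ∈ ({1, 2} : Finset (Fin 3)), W i ⁻¹' ![Set.univ, Set.Iic x₂, Set.Iic x₂] i by
      ext ω; simp [max_le_iff, and_comm]]
    rw [this]
    simp
  have h3 : μ {ω | max (W 0 ω) (W 2 ω) ≤ x₁ ∧ max (W 1 ω) (W 2 ω) ≤ x₂}
      = μ (W 0 ⁻¹' Set.Iic x₁) * μ (W 1 ⁻¹' Set.Iic x₂)
        * μ (W 2 ⁻¹' Set.Iic (min x₁ x₂)) := by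
    have := hindep.measure_inter_preimage_eq_mul (S := Finset.univ)
      (sets := ![Set.Iic x₁, Set.Iic x₂, Set.Iic (min x₁ x₂)]) (fun i _ => by
        fin_cases i <;> simp [hmeas])
    rw [show {ω | max (W 0 ω) (W 2 ω) ≤ x₁ ∧ max (W 1 ω) (W 2 ω) ≤ x₂} =
        ⋂ i ∈ (Finset.univ : Finset (Fin 3)),
          W i ⁻¹' ![Set.Iic x₁, Set.Iic x₂, Set.Iic (min x₁ x₂)] i by
      ext ω
      simp only [Set.mem_setOf_eq, max_le_iff, Set.mem_iInter, Finset.mem_univ,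
        forall_true_left]
      constructor
      · rintro ⟨⟨h01, h21⟩, h12, h22⟩ i
        fin_cases i <;> simp [h01, h12, le_min h21 h22]
      · intro h
        have h0 := h 0; have h1 := h 1; have h2 := h 2
        simp only [Matrix.cons_val_zero, Matrix.cons_val_one, Matrix.head_cons,
          Set.mem_preimage, Set.mem_Iic] at h0 h1 h2
        exact ⟨⟨h0, le_trans h2 (min_le_left _ _)⟩, h1,
          le_trans h2 (min_le_right _ _)⟩]
    rw [this]
    rw [Fin.prod_univ_three]
    simp [mul_assoc]
  rw [h1, h2, h3]
  -- rearrange and compare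
  have key : μ (W 2 ⁻¹' Set.Iic x₁) * μ (W 2 ⁻¹' Set.Iic x₂)
      ≤ μ (W 2 ⁻¹' Set.Iic (min x₁ x₂)) := by
    rcases le_total x₁ x₂ with h | h
    · rw [min_eq_left h]
      calc μ (W 2 ⁻¹' Set.Iic x₁) * μ (W 2 ⁻¹' Set.Iic x₂)
          ≤ μ (W 2 ⁻¹' Set.Iic x₁) * 1 := by
            gcongr; exact prob_le_one
        _ = μ (W 2 ⁻¹' Set.Iic x₁) := mul_one _
    · rw [min_eq_right h]
      calc μ (W 2 ⁻¹' Set.Iic x₁) * μ (W 2 ⁻¹' Set.Iic x₂)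
          ≤ 1 * μ (W 2 ⁻¹' Set.Iic x₂) := by
            gcongr; exact prob_le_one
        _ = μ (W 2 ⁻¹' Set.Iic x₂) := one_mul _
  calc μ (W 0 ⁻¹' Set.Iic x₁) * μ (W 2 ⁻¹' Set.Iic x₁)
        * (μ (W 1 ⁻¹' Set.Iic x₂) * μ (W 2 ⁻¹' Set.Iic x₂))
      = μ (W 0 ⁻¹' Set.Iic x₁) * μ (W 1 ⁻¹' Set.Iic x₂)
        * (μ (W 2 ⁻¹' Set.Iic x₁) * μ (W 2 ⁻¹' Set.Iic x₂)) := by ring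
    _ ≤ μ (W 0 ⁻¹' Set.Iic x₁) * μ (W 1 ⁻¹' Set.Iic x₂)
        * μ (W 2 ⁻¹' Set.Iic (min x₁ x₂)) := by gcongr
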